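/- Let N_2 be the hat function and let ψ be the Chui–Wang linear spline wavelet ψ(x) = (1/12)·( N_2(2x) − 6 N_2(2x−1) + 10 N_2(2x−2) − 6 N_2(2x−3) + N_2(2x−4) ). Then ψ is orthogonal in L²(ℝ) to every integer translate of the generator: for every integer l, ∫_ℝ ψ(x) N_2(x − l) dx = 0. -/

import Mathlib

open MeasureTheory

/-- The hat function (linear B-spline): `N₂(x) = x` on `[0,1]`, `2 − x` on `[1,2]`, `0` else. -/
noncomputable def N2 : ℝ → ℝ := fun x =>
  if 0 ≤ x ∧ x ≤ 1 then x else if 1 ≤ x ∧ x ≤ 2 then 2 - x else 0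

/-- The Chui–Wang linear spline wavelet, with filter `g = [1, −6, 10, −6, 1]/12`. -/
noncomputable def ψ : ℝ → ℝ := fun x =>
  (1 / 12) * (N2 (2 * x) - 6 * N2 (2 * x - 1) + 10 * N2 (2 * x - 2) - 6 * N2 (2 * x - 3) +
    N2 (2 * x - 4))

lemma N2_eq_max : N2 = fun x => max 0 (min x (2 - x)) := by
  funext x
  simp only [N2]
  split_ifs with h1 h2
  · rw [min_eq_left (by linarith), max_eq_right h1.1]
  · rw [min_eq_right (by linarith), max_eq_right (by linarith)]
  · push_neg at h1 h2
    rcases le_or_gt 0 x with h | h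
    · have := h1 h
      have := h2 (by linarith)
      rw [min_eq_right (by linarith), max_eq_left (by linarith)]
    · rw [min_eq_left (by linarith), max_eq_left (by linarith)]

lemma N2_cont : Continuous N2 := by
  rw [N2_eq_max]; fun_prop

lemma N2_mem1 (x : ℝ) (h1 : 0 ≤ x) (h2 : x ≤ 1) : N2 x = x := by
  simp only [N2]; rw [if_pos ⟨h1, h2⟩]

lemma N2_mem2 (x : ℝ) (h1 : 1 ≤ x) (h2 : x ≤ 2) : N2 x = 2 - x := by
  simp only [N2]
  split_ifs with h h'
  · linarith [h.2]
  · rfl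
  · exact absurd ⟨h1, h2⟩ h'

lemma N2_le (x : ℝ) (h : x ≤ 0) : N2 x = 0 := by
  simp only [N2]
  split_ifs with h1 h2
  · linarith [h1.1]
  · linarith [h2.1]
  · rfl

lemma N2_ge (x : ℝ) (h : 2 ≤ x) : N2 x = 0 := by
  simp only [N2]
  split_ifs with h1 h2
  · linarith [h1.2]
  · linarith [h2.2]
  · rfl

lemma ψ_cont : Continuous ψ := by
  unfold ψ
  have := N2_cont
  fun_prop

lemma poly_int (c2 c1 c0 a b : ℝ) :
    ∫ x in a..b, (c2 * x ^ 2 + c1 * x + c0) =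
      (c2 * b ^ 3 / 3 + c1 * b ^ 2 / 2 + c0 * b) - (c2 * a ^ 3 / 3 + c1 * a ^ 2 / 2 + c0 * a) := by
  have h : ∀ x : ℝ, HasDerivAt (fun y : ℝ => c2 * y ^ 3 / 3 + c1 * y ^ 2 / 2 + c0 * y)
      (c2 * x ^ 2 + c1 * x + c0) x := by
    intro x
    have h1 := ((hasDerivAt_pow 3 x).const_mul c2).div_const 3
    have h2 := ((hasDerivAt_pow 2 x).const_mul c1).div_const 2
    have h3 := (hasDerivAt_id x).const_mul c0
    exact ((h1.add h2).add h3).congr_deriv (by ring)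
  rw [intervalIntegral.integral_eq_sub_of_hasDerivAt (fun x _ => h x)
    (Continuous.intervalIntegrable (by fun_prop) a b)]

lemma sub_int (f : ℝ → ℝ) (a b c2 c1 c0 : ℝ) (hab : a ≤ b)
    (h : ∀ x, a ≤ x → x ≤ b → f x = c2 * x ^ 2 + c1 * x + c0) :
    ∫ x in a..b, f x =
      (c2 * b ^ 3 / 3 + c1 * b ^ 2 / 2 + c0 * b) - (c2 * a ^ 3 / 3 + c1 * a ^ 2 / 2 + c0 * a) := by
  rw [intervalIntegral.integral_congr (g := fun x => c2 * x ^ 2 + c1 * x + c0) ?_, poly_int]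
  intro x hx
  rw [Set.uIcc_of_le hab] at hx
  exact h x hx.1 hx.2

lemma ψ_le {x : ℝ} (h : x ≤ 0) : ψ x = 0 := by
  simp only [ψ]
  rw [N2_le (2 * x) (by linarith), N2_le (2 * x - 1) (by linarith),
    N2_le (2 * x - 2) (by linarith), N2_le (2 * x - 3) (by linarith),
    N2_le (2 * x - 4) (by linarith)]
  ring

lemma ψ_ge {x : ℝ} (h : 3 ≤ x) : ψ x = 0 := by
  simp only [ψ]
  rw [N2_ge (2 * x) (by linarith), N2_ge (2 * x - 1) (by linarith),
    N2_ge (2 * x - 2) (by linarith), N2_ge (2 * x - 3) (by linarith),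
    N2_ge (2 * x - 4) (by linarith)]
  ring

lemma ψ₀ {x : ℝ} (h1 : 0 ≤ x) (h2 : x ≤ 1 / 2) :
    ψ x = (1 / 12) * (0 + 2 * x) := by
  simp only [ψ]
  rw [N2_mem1 (2 * x) (by linarith) (by linarith), N2_le (2 * x - 1) (by linarith), N2_le (2 * x - 2) (by linarith), N2_le (2 * x - 3) (by linarith), N2_le (2 * x - 4) (by linarith)]
  ring

lemma ψ₁ {x : ℝ} (h1 : 1 / 2 ≤ x) (h2 : x ≤ 1) :
    ψ x = (1 / 12) * (8 + (-14) * x) := by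
  simp only [ψ]
  rw [N2_mem2 (2 * x) (by linarith) (by linarith), N2_mem1 (2 * x - 1) (by linarith) (by linarith), N2_le (2 * x - 2) (by linarith), N2_le (2 * x - 3) (by linarith), N2_le (2 * x - 4) (by linarith)]
  ring

lemma ψ₂ {x : ℝ} (h1 : 1 ≤ x) (h2 : x ≤ 3 / 2) :
    ψ x = (1 / 12) * ((-38) + 32 * x) := by
  simp only [ψ]
  rw [N2_ge (2 * x) (by linarith), N2_mem2 (2 * x - 1) (by linarith) (by linarith), N2_mem1 (2 * x - 2) (by linarith) (by linarith), N2_le (2 * x - 3) (by linarith), N2_le (2 * x - 4) (by linarith)]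
  ring

lemma ψ₃ {x : ℝ} (h1 : 3 / 2 ≤ x) (h2 : x ≤ 2) :
    ψ x = (1 / 12) * (58 + (-32) * x) := by
  simp only [ψ]
  rw [N2_ge (2 * x) (by linarith), N2_ge (2 * x - 1) (by linarith), N2_mem2 (2 * x - 2) (by linarith) (by linarith), N2_mem1 (2 * x - 3) (by linarith) (by linarith), N2_le (2 * x - 4) (by linarith)]
  ring

lemma ψ₄ {x : ℝ} (h1 : 2 ≤ x) (h2 : x ≤ 5 / 2) :
    ψ x = (1 / 12) * ((-34) + 14 * x) := by
  simp only [ψ]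
  rw [N2_ge (2 * x) (by linarith), N2_ge (2 * x - 1) (by linarith), N2_ge (2 * x - 2) (by linarith), N2_mem2 (2 * x - 3) (by linarith) (by linarith), N2_mem1 (2 * x - 4) (by linarith) (by linarith)]
  ring

lemma ψ₅ {x : ℝ} (h1 : 5 / 2 ≤ x) (h2 : x ≤ 3) :
    ψ x = (1 / 12) * (6 + (-2) * x) := by
  simp only [ψ]
  rw [N2_ge (2 * x) (by linarith), N2_ge (2 * x - 1) (by linarith), N2_ge (2 * x - 2) (by linarith), N2_ge (2 * x - 3) (by linarith), N2_mem2 (2 * x - 4) (by linarith) (by linarith)]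
  ring

lemma case_neg1 : ∫ x in (0:ℝ)..3, ψ x * N2 (x - ((-1 : ℤ) : ℝ)) = 0 := by
  have hi : ∀ a b : ℝ, IntervalIntegrable (fun x => ψ x * N2 (x - ((-1 : ℤ) : ℝ))) volume a b :=
    fun a b => (ψ_cont.mul (N2_cont.comp (by fun_prop))).intervalIntegrable a b
  rw [← intervalIntegral.integral_add_adjacent_intervals (hi 0 (1/2)) (hi (1/2) 3),
      ← intervalIntegral.integral_add_adjacent_intervals (hi (1/2) 1) (hi 1 3),
      ← intervalIntegral.integral_add_adjacent_intervals (hi 1 (3/2)) (hi (3/2) 3),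
      ← intervalIntegral.integral_add_adjacent_intervals (hi (3/2) 2) (hi 2 3),
      ← intervalIntegral.integral_add_adjacent_intervals (hi 2 (5/2)) (hi (5/2) 3)]
  rw [    sub_int _ (0) (1 / 2) (-1 / 6) (1 / 6) 0 (by norm_num) (by
      intro x h1 h2
      rw [ψ₀ (by linarith) (by linarith), N2_mem2 (x - ((-1 : ℤ) : ℝ)) (by push_cast; linarith) (by push_cast; linarith)]
      push_cast
      ring),
    sub_int _ (1 / 2) (1) (7 / 6) (-11 / 6) (2 / 3) (by norm_num) (by
      intro x h1 h2
      rw [ψ₁ (by linarith) (by linarith), N2_mem2 (x - ((-1 : ℤ) : ℝ)) (by push_cast; linarith) (by push_cast; linarith)]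
      push_cast
      ring),
    sub_int _ (1) (3 / 2) 0 0 0 (by norm_num) (by
      intro x h1 h2
      rw [ψ₂ (by linarith) (by linarith), N2_ge (x - ((-1 : ℤ) : ℝ)) (by push_cast; linarith)]
      push_cast
      ring),
    sub_int _ (3 / 2) (2) 0 0 0 (by norm_num) (by
      intro x h1 h2
      rw [ψ₃ (by linarith) (by linarith), N2_ge (x - ((-1 : ℤ) : ℝ)) (by push_cast; linarith)]
      push_cast
      ring),
    sub_int _ (2) (5 / 2) 0 0 0 (by norm_num) (by
      intro x h1 h2
      rw [ψ₄ (by linarith) (by linarith), N2_ge (x - ((-1 : ℤ) : ℝ)) (by push_cast; linarith)]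
      push_cast
      ring),
    sub_int _ (5 / 2) (3) 0 0 0 (by norm_num) (by
      intro x h1 h2
      rw [ψ₅ (by linarith) (by linarith), N2_ge (x - ((-1 : ℤ) : ℝ)) (by push_cast; linarith)]
      push_cast
      ring)]
  norm_num

lemma case0 : ∫ x in (0:ℝ)..3, ψ x * N2 (x - ((0 : ℤ) : ℝ)) = 0 := by
  have hi : ∀ a b : ℝ, IntervalIntegrable (fun x => ψ x * N2 (x - ((0 : ℤ) : ℝ))) volume a b :=
    fun a b => (ψ_cont.mul (N2_cont.comp (by fun_prop))).intervalIntegrable a b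
  rw [← intervalIntegral.integral_add_adjacent_intervals (hi 0 (1/2)) (hi (1/2) 3),
      ← intervalIntegral.integral_add_adjacent_intervals (hi (1/2) 1) (hi 1 3),
      ← intervalIntegral.integral_add_adjacent_intervals (hi 1 (3/2)) (hi (3/2) 3),
      ← intervalIntegral.integral_add_adjacent_intervals (hi (3/2) 2) (hi 2 3),
      ← intervalIntegral.integral_add_adjacent_intervals (hi 2 (5/2)) (hi (5/2) 3)]
  rw [    sub_int _ (0) (1 / 2) (1 / 6) 0 0 (by norm_num) (by
      intro x h1 h2
      rw [ψ₀ (by linarith) (by linarith), N2_mem1 (x - ((0 : ℤ) : ℝ)) (by push_cast; linarith) (by push_cast; linarith)]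
      push_cast
      ring),
    sub_int _ (1 / 2) (1) (-7 / 6) (2 / 3) 0 (by norm_num) (by
      intro x h1 h2
      rw [ψ₁ (by linarith) (by linarith), N2_mem1 (x - ((0 : ℤ) : ℝ)) (by push_cast; linarith) (by push_cast; linarith)]
      push_cast
      ring),
    sub_int _ (1) (3 / 2) (-8 / 3) (17 / 2) (-19 / 3) (by norm_num) (by
      intro x h1 h2
      rw [ψ₂ (by linarith) (by linarith), N2_mem2 (x - ((0 : ℤ) : ℝ)) (by push_cast; linarith) (by push_cast; linarith)]
      push_cast
      ring),
    sub_int _ (3 / 2) (2) (8 / 3) (-61 / 6) (29 / 3) (by norm_num) (by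
      intro x h1 h2
      rw [ψ₃ (by linarith) (by linarith), N2_mem2 (x - ((0 : ℤ) : ℝ)) (by push_cast; linarith) (by push_cast; linarith)]
      push_cast
      ring),
    sub_int _ (2) (5 / 2) 0 0 0 (by norm_num) (by
      intro x h1 h2
      rw [ψ₄ (by linarith) (by linarith), N2_ge (x - ((0 : ℤ) : ℝ)) (by push_cast; linarith)]
      push_cast
      ring),
    sub_int _ (5 / 2) (3) 0 0 0 (by norm_num) (by
      intro x h1 h2
      rw [ψ₅ (by linarith) (by linarith), N2_ge (x - ((0 : ℤ) : ℝ)) (by push_cast; linarith)]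
      push_cast
      ring)]
  norm_num

lemma case1 : ∫ x in (0:ℝ)..3, ψ x * N2 (x - ((1 : ℤ) : ℝ)) = 0 := by
  have hi : ∀ a b : ℝ, IntervalIntegrable (fun x => ψ x * N2 (x - ((1 : ℤ) : ℝ))) volume a b :=
    fun a b => (ψ_cont.mul (N2_cont.comp (by fun_prop))).intervalIntegrable a b
  rw [← intervalIntegral.integral_add_adjacent_intervals (hi 0 (1/2)) (hi (1/2) 3),
      ← intervalIntegral.integral_add_adjacent_intervals (hi (1/2) 1) (hi 1 3),
      ← intervalIntegral.integral_add_adjacent_intervals (hi 1 (3/2)) (hi (3/2) 3),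
      ← intervalIntegral.integral_add_adjacent_intervals (hi (3/2) 2) (hi 2 3),
      ← intervalIntegral.integral_add_adjacent_intervals (hi 2 (5/2)) (hi (5/2) 3)]
  rw [    sub_int _ (0) (1 / 2) 0 0 0 (by norm_num) (by
      intro x h1 h2
      rw [ψ₀ (by linarith) (by linarith), N2_le (x - ((1 : ℤ) : ℝ)) (by push_cast; linarith)]
      push_cast
      ring),
    sub_int _ (1 / 2) (1) 0 0 0 (by norm_num) (by
      intro x h1 h2
      rw [ψ₁ (by linarith) (by linarith), N2_le (x - ((1 : ℤ) : ℝ)) (by push_cast; linarith)]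
      push_cast
      ring),
    sub_int _ (1) (3 / 2) (8 / 3) (-35 / 6) (19 / 6) (by norm_num) (by
      intro x h1 h2
      rw [ψ₂ (by linarith) (by linarith), N2_mem1 (x - ((1 : ℤ) : ℝ)) (by push_cast; linarith) (by push_cast; linarith)]
      push_cast
      ring),
    sub_int _ (3 / 2) (2) (-8 / 3) (15 / 2) (-29 / 6) (by norm_num) (by
      intro x h1 h2
      rw [ψ₃ (by linarith) (by linarith), N2_mem1 (x - ((1 : ℤ) : ℝ)) (by push_cast; linarith) (by push_cast; linarith)]
      push_cast
      ring),
    sub_int _ (2) (5 / 2) (-7 / 6) (19 / 3) (-17 / 2) (by norm_num) (by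
      intro x h1 h2
      rw [ψ₄ (by linarith) (by linarith), N2_mem2 (x - ((1 : ℤ) : ℝ)) (by push_cast; linarith) (by push_cast; linarith)]
      push_cast
      ring),
    sub_int _ (5 / 2) (3) (1 / 6) (-1) (3 / 2) (by norm_num) (by
      intro x h1 h2
      rw [ψ₅ (by linarith) (by linarith), N2_mem2 (x - ((1 : ℤ) : ℝ)) (by push_cast; linarith) (by push_cast; linarith)]
      push_cast
      ring)]
  norm_num

lemma case2 : ∫ x in (0:ℝ)..3, ψ x * N2 (x - ((2 : ℤ) : ℝ)) = 0 := by
  have hi : ∀ a b : ℝ, IntervalIntegrable (fun x => ψ x * N2 (x - ((2 : ℤ) : ℝ))) volume a b :=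
    fun a b => (ψ_cont.mul (N2_cont.comp (by fun_prop))).intervalIntegrable a b
  rw [← intervalIntegral.integral_add_adjacent_intervals (hi 0 (1/2)) (hi (1/2) 3),
      ← intervalIntegral.integral_add_adjacent_intervals (hi (1/2) 1) (hi 1 3),
      ← intervalIntegral.integral_add_adjacent_intervals (hi 1 (3/2)) (hi (3/2) 3),
      ← intervalIntegral.integral_add_adjacent_intervals (hi (3/2) 2) (hi 2 3),
      ← intervalIntegral.integral_add_adjacent_intervals (hi 2 (5/2)) (hi (5/2) 3)]
  rw [    sub_int _ (0) (1 / 2) 0 0 0 (by norm_num) (by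
      intro x h1 h2
      rw [ψ₀ (by linarith) (by linarith), N2_le (x - ((2 : ℤ) : ℝ)) (by push_cast; linarith)]
      push_cast
      ring),
    sub_int _ (1 / 2) (1) 0 0 0 (by norm_num) (by
      intro x h1 h2
      rw [ψ₁ (by linarith) (by linarith), N2_le (x - ((2 : ℤ) : ℝ)) (by push_cast; linarith)]
      push_cast
      ring),
    sub_int _ (1) (3 / 2) 0 0 0 (by norm_num) (by
      intro x h1 h2
      rw [ψ₂ (by linarith) (by linarith), N2_le (x - ((2 : ℤ) : ℝ)) (by push_cast; linarith)]
      push_cast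
      ring),
    sub_int _ (3 / 2) (2) 0 0 0 (by norm_num) (by
      intro x h1 h2
      rw [ψ₃ (by linarith) (by linarith), N2_le (x - ((2 : ℤ) : ℝ)) (by push_cast; linarith)]
      push_cast
      ring),
    sub_int _ (2) (5 / 2) (7 / 6) (-31 / 6) (17 / 3) (by norm_num) (by
      intro x h1 h2
      rw [ψ₄ (by linarith) (by linarith), N2_mem1 (x - ((2 : ℤ) : ℝ)) (by push_cast; linarith) (by push_cast; linarith)]
      push_cast
      ring),
    sub_int _ (5 / 2) (3) (-1 / 6) (5 / 6) (-1) (by norm_num) (by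
      intro x h1 h2
      rw [ψ₅ (by linarith) (by linarith), N2_mem1 (x - ((2 : ℤ) : ℝ)) (by push_cast; linarith) (by push_cast; linarith)]
      push_cast
      ring)]
  norm_num

/-- The Chui–Wang linear spline wavelet is orthogonal in `L²(ℝ)` to every integer translate
of the generator `N₂`. -/
theorem chuiWang_semiorthogonal :
    ∀ l : ℤ, (∫ x : ℝ, ψ x * N2 (x - (l : ℝ))) = 0 := by
  intro l
  have key : (∫ x : ℝ, ψ x * N2 (x - (l : ℝ))) = ∫ x in (0:ℝ)..3, ψ x * N2 (x - (l : ℝ)) := by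
    rw [intervalIntegral.integral_of_le (by norm_num : (0:ℝ) ≤ 3)]
    refine (setIntegral_eq_integral_of_forall_compl_eq_zero fun x hx => ?_).symm
    simp only [Set.mem_Ioc, not_and_or, not_lt, not_le] at hx
    rcases hx with h | h
    · rw [ψ_le h, zero_mul]
    · rw [ψ_ge (by linarith), zero_mul]
  rw [key]
  rcases le_or_gt l (-2) with hl | hl
  · have hlr : (l : ℝ) ≤ -2 := by exact_mod_cast hl
    rw [intervalIntegral.integral_congr (g := fun _ => (0:ℝ)) ?_]
    · simp
    · intro x hx
      rw [Set.uIcc_of_le (by norm_num : (0:ℝ) ≤ 3)] at hx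
      show ψ x * N2 (x - (l : ℝ)) = 0
      rw [N2_ge (x - (l : ℝ)) (by linarith [hx.1]), mul_zero]
  rcases le_or_gt 3 l with hl' | hl'
  · have hlr : (3 : ℝ) ≤ (l : ℝ) := by exact_mod_cast hl'
    rw [intervalIntegral.integral_congr (g := fun _ => (0:ℝ)) ?_]
    · simp
    · intro x hx
      rw [Set.uIcc_of_le (by norm_num : (0:ℝ) ≤ 3)] at hx
      show ψ x * N2 (x - (l : ℝ)) = 0
      rw [N2_le (x - (l : ℝ)) (by linarith [hx.2]), mul_zero]
  interval_cases l
  · exact case_neg1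
  · exact case0
  · exact case1
  · exact case2
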